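/- Let α:[0,1]→ℝ^d be absolutely continuous. There exists a right-continuous, strictly monotonic function φ̃:[0,1]→[0,1] such that: (i) for every absolutely continuous F:[0,1]→ℝ^k with {t : F'(t) ≠ 0} ⊆ {t : α'(t) ≠ 0}, the composition F∘φ̃ is absolutely continuous (in particular α∘φ̃ is absolutely continuous); (ii) for almost every s, the chain rule (α∘φ̃)'(s) = α'(φ̃(s))·φ̃'(s) holds and |(α∘φ̃)'(s)| = ‖α‖_AC (so α∘φ̃ has constant speed); and (iii) μ_{α∘φ̃} = μ_α, and in particular ‖α∘φ̃‖_AC = ‖α‖_AC. -/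

import Mathlib

open MeasureTheory Set
open scoped RealInnerProductSpace ENNReal NNReal

noncomputable section

/-- Euclidean space `ℝ^d`. -/
abbrev Euc (d : ℕ) : Type := EuclideanSpace ℝ (Fin d)

/-- The unit sphere `S^{d-1}` in `ℝ^d`. -/
abbrev Sph (d : ℕ) : Type := Metric.sphere (0 : Euc d) 1

/-- The antipodal equivalence relation on the sphere. -/
def projRel (d : ℕ) : Setoid (Sph d) where
  r x y := (x : Euc d) = (y : Euc d) ∨ (x : Euc d) = -(y : Euc d)
  iseqv := by
    refine ⟨fun x => Or.inl rfl, ?_, ?_⟩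
    · rintro x y (h | h)
      · exact Or.inl h.symm
      · exact Or.inr (by rw [h, neg_neg])
    · rintro x y z (h1 | h1) (h2 | h2)
      · exact Or.inl (h1.trans h2)
      · exact Or.inr (h1.trans h2)
      · exact Or.inr (by rw [h1, h2])
      · exact Or.inl (by rw [h1, h2, neg_neg])

/-- Real projective space `P^{d-1}`, as the quotient of the sphere identifying
antipodal points. -/
abbrev Proj (d : ℕ) : Type := Quotient (projRel d)

/-- The projection `π : S^{d-1} → P^{d-1}`. -/
def projQ {d : ℕ} (x : Sph d) : Proj d := Quotient.mk (projRel d) x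

/-- The unit vector in the direction of a nonzero vector `v`. -/
def unitize {d : ℕ} (v : Euc d) (hv : v ≠ 0) : Sph d :=
  ⟨‖v‖⁻¹ • v, by
    rw [mem_sphere_zero_iff_norm, norm_smul, norm_inv, norm_norm,
      inv_mul_cancel₀ (norm_ne_zero_iff.mpr hv)]⟩

/-- The degree-1 homogeneous extension `f̂ : ℝ^d → ℝ` of a function
`f : P^{d-1} → ℝ`, determined by `f̂(rξ) = |r| f(π ξ)` for `ξ` on the sphere. -/
def hext {d : ℕ} (f : Proj d → ℝ) (v : Euc d) : ℝ :=
  haveI := Classical.propDecidable (v = 0)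
  if hv : v = 0 then 0 else ‖v‖ * f (projQ (unitize v hv))

/-- `IsACDeriv α g` : the curve `α` is absolutely continuous on `[0,1]`
with (a.e.) derivative `g`, i.e. `α` is the indefinite integral of the
integrable function `g`. -/
def IsACDeriv {V : Type*} [NormedAddCommGroup V] [NormedSpace ℝ V]
    (α g : ℝ → V) : Prop :=
  IntervalIntegrable g volume 0 1 ∧
  ∀ t ∈ Icc (0:ℝ) 1, α t = α 0 + ∫ s in (0:ℝ)..t, g s

/-- `IsCurveMeasure g μ` : `μ` is the measure on projective space associated
(via the Riesz representation) to a curve with derivative `g`; it is the finite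
Borel measure satisfying `∫ f dμ = ∫_0^1 f̂(g t) dt` for all continuous `f`. -/
def IsCurveMeasure {d : ℕ} (g : ℝ → Euc d) (μ : Measure (Proj d)) : Prop :=
  IsFiniteMeasure μ ∧
  ∀ f : Proj d → ℝ, Continuous f → ∫ x, f x ∂μ = ∫ t in (0:ℝ)..1, hext f (g t)

/-! ### Auxiliary: topology and measurability of `Proj d` -/

namespace Stmt19Aux

variable {d : ℕ}

/-- Squaring map into matrices. -/
def sq (v : Euc d) : Fin d → Fin d → ℝ := fun i j => v i * v j

lemma continuous_sq : Continuous (sq (d := d)) := by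
  refine continuous_pi fun i => continuous_pi fun j => ?_
  exact ((EuclideanSpace.proj i).continuous).mul ((EuclideanSpace.proj j).continuous)

lemma sq_eq_cases {x y : Euc d} (hx : x ≠ 0) (h : sq x = sq y) :
    x = y ∨ x = -y := by
  obtain ⟨i, hi⟩ : ∃ i, x i ≠ 0 := by
    by_contra hc
    push_neg at hc
    exact hx (by ext i; simpa using hc i)
  have key : ∀ a b, x a * x b = y a * y b := fun a b => congrFun (congrFun h a) b
  have hysq : y i * y i = x i * x i := (key i i).symm
  have hyi : y i ≠ 0 := by
    intro h0
    rw [h0, mul_zero] at hysq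
    exact hi (mul_self_eq_zero.mp hysq.symm)
  set c : ℝ := x i / y i with hc
  have hc2 : c * c = 1 := by
    rw [hc, div_mul_div_comm, ← hysq, div_self (mul_ne_zero hyi hyi)]
  have hxc : x = c • y := by
    ext a
    have h3 : x i * (x a * y i) = x i * (y a * x i) := by
      linear_combination (y i) * (key a i) + (y a) * hysq
    have h4 : x a * y i = y a * x i := mul_left_cancel₀ hi h3
    have h5 : x a = c * y a := by
      rw [hc]
      field_simp
      linarith [h4]
    simpa [PiLp.smul_apply, smul_eq_mul] using h5
  rcases mul_self_eq_one_iff.mp hc2 with h1 | h1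
  · left; rw [hxc, h1, one_smul]
  · right; rw [hxc, h1, neg_one_smul]

/-- The injection of projective space into matrices. -/
def phiP : Proj d → (Fin d → Fin d → ℝ) :=
  Quotient.lift (fun x : Sph d => sq (x : Euc d)) (by
    rintro x y (h | h)
    · simp [h]
    · funext i j
      show (x : Euc d) i * (x : Euc d) j = (y : Euc d) i * (y : Euc d) j
      rw [h]
      simp only [PiLp.neg_apply]
      ring)

lemma phiP_comp (x : Sph d) : phiP (projQ x) = sq (x : Euc d) := rfl

lemma continuous_phiP : Continuous (phiP (d := d)) := by
  apply continuous_quot_lift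
  exact continuous_sq.comp continuous_subtype_val

lemma sph_ne_zero (x : Sph d) : (x : Euc d) ≠ 0 := by
  have hx : ‖(x : Euc d)‖ = 1 := by
    simpa [mem_sphere_zero_iff_norm] using x.2
  intro h0
  rw [h0] at hx; simp at hx

lemma injective_phiP : Function.Injective (phiP (d := d)) := by
  rintro ⟨x⟩ ⟨y⟩ h
  have h' : sq (x : Euc d) = sq (y : Euc d) := h
  rcases sq_eq_cases (sph_ne_zero x) h' with h1 | h1
  · exact Quotient.sound (Or.inl h1)
  · exact Quotient.sound (Or.inr h1)

instance : CompactSpace (Proj d) := Quotient.compactSpace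

lemma isEmbedding_phiP : Topology.IsEmbedding (phiP (d := d)) :=
  (continuous_phiP.isClosedEmbedding injective_phiP).toIsEmbedding

instance : T2Space (Proj d) := isEmbedding_phiP.t2Space

instance : TopologicalSpace.PseudoMetrizableSpace (Proj d) :=
  isEmbedding_phiP.pseudoMetrizableSpace

instance : PolishSpace (Sph d) := Metric.isClosed_sphere.polishSpace

lemma continuous_projQ : Continuous (projQ (d := d)) := continuous_quotient_mk'

/-- The measurable structure on `Proj d` is the Borel structure. -/
instance : BorelSpace (Proj d) := by
  constructor
  apply le_antisymm
  · -- map σ-algebra ≤ borel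
    intro A hA
    -- hA : MeasurableSet[map] A, i.e. projQ ⁻¹' A measurable
    have hA' : MeasurableSet (projQ ⁻¹' A) := hA
    set B : Set (Sph d) := projQ ⁻¹' A with hB
    -- decompose into hemispheres
    have himg : MeasurableSet ((fun x : Sph d => sq (x : Euc d)) '' B) := by
      have : ((fun x : Sph d => sq (x : Euc d)) '' B) =
          (⋃ i : Fin d, (fun x : Sph d => sq (x : Euc d)) '' (B ∩ {x | 0 < (x : Euc d) i})) ∪
          (⋃ i : Fin d, (fun x : Sph d => sq (x : Euc d)) '' (B ∩ {x | (x : Euc d) i < 0})) := by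
        apply Subset.antisymm
        · rintro - ⟨x, hxB, rfl⟩
          obtain ⟨i, hi⟩ : ∃ i, (x : Euc d) i ≠ 0 := by
            by_contra hc
            push_neg at hc
            exact sph_ne_zero x (by ext i; simpa using hc i)
          rcases hi.lt_or_gt with h1 | h1
          · exact Or.inr (mem_iUnion.mpr ⟨i, ⟨x, ⟨hxB, h1⟩, rfl⟩⟩)
          · exact Or.inl (mem_iUnion.mpr ⟨i, ⟨x, ⟨hxB, h1⟩, rfl⟩⟩)
        · rintro z (hz | hz) <;>
          · rcases mem_iUnion.mp hz with ⟨i, x, ⟨hxB, _⟩, rfl⟩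
            exact ⟨x, hxB, rfl⟩
      rw [this]
      have hcont : Continuous (fun x : Sph d => sq (x : Euc d)) :=
        continuous_sq.comp continuous_subtype_val
      have hinj : ∀ (i : Fin d) (s : Set (Sph d)),
          (∀ x ∈ s, 0 < (x : Euc d) i ∨ (x:Euc d) i < 0 → True) → True := fun _ _ _ => trivial
      apply MeasurableSet.union <;> apply MeasurableSet.iUnion <;> intro i
      · have hmeas : MeasurableSet (B ∩ {x : Sph d | 0 < (x : Euc d) i}) := by
          apply hA'.inter
          exact measurableSet_lt measurable_const
            (((EuclideanSpace.proj i).continuous.comp continuous_subtype_val).measurable)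
        apply hmeas.image_of_continuousOn_injOn hcont.continuousOn
        rintro x ⟨-, hx⟩ y ⟨-, hy⟩ hxy
        rcases sq_eq_cases (sph_ne_zero x) hxy with h1 | h1
        · exact Subtype.ext h1
        · exfalso
          have : (x : Euc d) i = -((y : Euc d) i) := by rw [h1]; simp
          simp only [mem_setOf_eq] at hx hy
          linarith [this]
      · have hmeas : MeasurableSet (B ∩ {x : Sph d | (x : Euc d) i < 0}) := by
          apply hA'.inter
          exact measurableSet_lt
            (((EuclideanSpace.proj i).continuous.comp continuous_subtype_val).measurable)
            measurable_const
        apply hmeas.image_of_continuousOn_injOn hcont.continuousOn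
        rintro x ⟨-, hx⟩ y ⟨-, hy⟩ hxy
        rcases sq_eq_cases (sph_ne_zero x) hxy with h1 | h1
        · exact Subtype.ext h1
        · exfalso
          have : (x : Euc d) i = -((y : Euc d) i) := by rw [h1]; simp
          simp only [mem_setOf_eq] at hx hy
          linarith [this]
    -- now pull back through phiP
    have hAeq : A = phiP ⁻¹' (phiP '' A) := (preimage_image_eq A injective_phiP).symm
    have hsurj : Function.Surjective (projQ (d := d)) := by
      intro q
      obtain ⟨x, rfl⟩ := Quotient.exists_rep q
      exact ⟨x, rfl⟩
    have himgA : phiP '' A = (fun x : Sph d => sq (x : Euc d)) '' B := by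
      rw [hB]
      have : phiP '' A = (phiP ∘ projQ) '' (projQ ⁻¹' A) := by
        rw [image_comp, image_preimage_eq _ hsurj]
      exact this
    rw [hAeq, himgA]
    have hmb : @Measurable (Proj d) (Fin d → Fin d → ℝ) (borel (Proj d))
        (borel (Fin d → Fin d → ℝ)) phiP := continuous_phiP.borel_measurable
    have himg' : MeasurableSet[borel (Fin d → Fin d → ℝ)]
        ((fun x : Sph d => sq (x : Euc d)) '' B) := by
      rwa [← BorelSpace.measurable_eq]
    exact hmb himg' 
  · -- borel ≤ map
    exact MeasurableSpace.generateFrom_le fun U hU =>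
      ((hU.preimage continuous_projQ).measurableSet : MeasurableSet (projQ ⁻¹' U))


/-! ### The reparametrization -/

open Filter Topology intervalIntegral

structure Dat (ρ : ℝ → ℝ) : Prop where
  meas : Measurable ρ
  nonneg : ∀ t, 0 ≤ ρ t
  supp : ∀ t, t ∉ Icc (0:ℝ) 1 → ρ t = 0
  int : Integrable ρ
  pos : 0 < ∫ t in (0:ℝ)..1, ρ t

/-- Total length. -/
def Lv (ρ : ℝ → ℝ) : ℝ := ∫ t in (0:ℝ)..1, ρ t

/-- Normalized arc length. -/
def sigm (ρ : ℝ → ℝ) (t : ℝ) : ℝ := (∫ u in (0:ℝ)..t, ρ u) / Lv ρ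

/-- Right-continuous inverse of the arc length. -/
def phim (ρ : ℝ → ℝ) (u : ℝ) : ℝ := sInf ({t | t ∈ Icc (0:ℝ) 1 ∧ u < sigm ρ t} ∪ {1})

variable {ρ : ℝ → ℝ}

lemma Dat.ii (h : Dat ρ) (a b : ℝ) : IntervalIntegrable ρ volume a b :=
  h.int.intervalIntegrable

lemma Dat.sigm_mono (h : Dat ρ) : Monotone (sigm ρ) := by
  intro a b hab
  have := integral_add_adjacent_intervals (h.ii 0 a) (h.ii a b)
  have hnn : 0 ≤ ∫ u in a..b, ρ u := intervalIntegral.integral_nonneg hab fun u _ => h.nonneg u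
  rw [sigm, sigm, ← this]
  have hL : (0:ℝ) < Lv ρ := h.pos
  rw [div_le_div_iff_of_pos_right hL]
  linarith

lemma Dat.sigm_cont (h : Dat ρ) : Continuous (sigm ρ) :=
  (intervalIntegral.continuous_primitive (fun a b => h.ii a b) 0).div_const _

lemma Dat.sigm_zero (h : Dat ρ) : sigm ρ 0 = 0 := by
  simp [sigm]

lemma Dat.sigm_one (h : Dat ρ) : sigm ρ 1 = 1 := by
  rw [sigm, Lv, div_self h.pos.ne']

lemma Dat.sigm_of_ge_one (h : Dat ρ) {t : ℝ} (ht : 1 ≤ t) : sigm ρ t = 1 := by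
  have h1 : (∫ u in (1:ℝ)..t, ρ u) = 0 := by
    rw [intervalIntegral.integral_of_le ht,
      ← MeasureTheory.setIntegral_congr_set Ioo_ae_eq_Ioc]
    rw [MeasureTheory.setIntegral_congr_fun measurableSet_Ioo
      (fun x hx => h.supp x (fun hx' => absurd hx'.2 (not_le.mpr hx.1)))]
    simp
  have := integral_add_adjacent_intervals (h.ii 0 1) (h.ii 1 t)
  rw [sigm, ← this, h1, add_zero, Lv, div_self h.pos.ne']

lemma Dat.sigm_of_nonpos (h : Dat ρ) {t : ℝ} (ht : t ≤ 0) : sigm ρ t = 0 := by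
  have h1 : (∫ u in t..(0:ℝ), ρ u) = 0 := by
    rw [intervalIntegral.integral_of_le ht,
      ← MeasureTheory.setIntegral_congr_set Ioo_ae_eq_Ioc]
    rw [MeasureTheory.setIntegral_congr_fun measurableSet_Ioo
      (fun x hx => h.supp x (fun hx' => absurd hx'.1 (not_le.mpr hx.2)))]
    simp
  rw [sigm, intervalIntegral.integral_symm, h1, neg_zero, zero_div]

lemma Dat.sigm_le_one (h : Dat ρ) (t : ℝ) : sigm ρ t ≤ 1 := by
  calc sigm ρ t ≤ sigm ρ (max t 1) := h.sigm_mono (le_max_left _ _)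
  _ = 1 := h.sigm_of_ge_one (le_max_right _ _)

lemma Dat.sigm_nonneg (h : Dat ρ) (t : ℝ) : 0 ≤ sigm ρ t := by
  calc (0:ℝ) = sigm ρ (min t 0) := (h.sigm_of_nonpos (min_le_right _ _)).symm
  _ ≤ sigm ρ t := h.sigm_mono (min_le_left _ _)

lemma phim_set_nonempty (ρ : ℝ → ℝ) (u : ℝ) :
    ({t | t ∈ Icc (0:ℝ) 1 ∧ u < sigm ρ t} ∪ {1}).Nonempty := ⟨1, Or.inr rfl⟩

lemma phim_set_bdd (ρ : ℝ → ℝ) (u : ℝ) :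
    BddBelow ({t | t ∈ Icc (0:ℝ) 1 ∧ u < sigm ρ t} ∪ {1}) := by
  refine ⟨0, ?_⟩
  rintro t (ht | ht)
  · exact ht.1.1
  · rw [mem_singleton_iff] at ht; rw [ht]; norm_num

lemma phim_mem (ρ : ℝ → ℝ) (u : ℝ) : phim ρ u ∈ Icc (0:ℝ) 1 := by
  constructor
  · apply le_csInf (phim_set_nonempty ρ u)
    rintro t (ht | ht)
    · exact ht.1.1
    · rw [mem_singleton_iff] at ht; rw [ht]; norm_num
  · exact csInf_le (phim_set_bdd ρ u) (Or.inr rfl)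

lemma phim_mono (ρ : ℝ → ℝ) : Monotone (phim ρ) := by
  intro u v huv
  apply csInf_le_csInf (phim_set_bdd ρ u) (phim_set_nonempty ρ v)
  rintro t (ht | ht)
  · exact Or.inl ⟨ht.1, lt_of_le_of_lt huv ht.2⟩
  · exact Or.inr ht

lemma phim_le {u a : ℝ} (ha : a ∈ Icc (0:ℝ) 1) (hu : u < sigm ρ a) : phim ρ u ≤ a :=
  csInf_le (phim_set_bdd ρ u) (Or.inl ⟨ha, hu⟩)

lemma Dat.sigm_phim (h : Dat ρ) {u : ℝ} (hu : u ∈ Icc (0:ℝ) 1) :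
    sigm ρ (phim ρ u) = u := by
  have ht₀m := phim_mem ρ u
  have hinf : sInf ({t | t ∈ Icc (0:ℝ) 1 ∧ u < sigm ρ t} ∪ {1}) = phim ρ u := rfl
  apply le_antisymm
  · by_contra hlt
    push_neg at hlt
    -- u < sigm ρ (phim ρ u)
    have ht₀pos : 0 < phim ρ u := by
      rcases eq_or_lt_of_le ht₀m.1 with h0 | h0
      · exfalso
        rw [← h0, h.sigm_zero] at hlt
        exact absurd hu.1 (not_le.mpr hlt)
      · exact h0
    obtain ⟨δ, hδpos, hδ⟩ := Metric.continuousAt_iff.mp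
      (h.sigm_cont.continuousAt (x := phim ρ u)) (sigm ρ (phim ρ u) - u) (by linarith)
    have htlt : max (phim ρ u - δ/2) 0 < phim ρ u := by
      apply max_lt _ ht₀pos
      linarith
    have htmem : max (phim ρ u - δ/2) 0 ∈ Icc (0:ℝ) 1 :=
      ⟨le_max_right _ _, le_trans htlt.le ht₀m.2⟩
    have hdist : dist (max (phim ρ u - δ/2) 0) (phim ρ u) < δ := by
      rw [Real.dist_eq, abs_of_nonpos (by linarith)]
      have : phim ρ u - δ/2 ≤ max (phim ρ u - δ/2) 0 := le_max_left _ _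
      linarith
    have hd := hδ hdist
    rw [Real.dist_eq] at hd
    have husigt : u < sigm ρ (max (phim ρ u - δ/2) 0) := by
      cases' abs_lt.mp hd with h1 h2
      linarith
    exact absurd (phim_le htmem husigt) (not_le.mpr htlt)
  · by_contra hlt
    push_neg at hlt
    -- sigm ρ (phim ρ u) < u
    obtain ⟨δ, hδpos, hδ⟩ := Metric.continuousAt_iff.mp
      (h.sigm_cont.continuousAt (x := phim ρ u)) (u - sigm ρ (phim ρ u)) (by linarith)
    obtain ⟨t, ht, htlt⟩ := exists_lt_of_csInf_lt (phim_set_nonempty ρ u)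
      (show sInf _ < phim ρ u + δ by rw [hinf]; linarith)
    have ht₀let : phim ρ u ≤ t := csInf_le (phim_set_bdd ρ u) ht
    have hdist : dist t (phim ρ u) < δ := by
      rw [Real.dist_eq, abs_of_nonneg (by linarith)]
      linarith
    have hsig := hδ hdist
    rw [Real.dist_eq] at hsig
    have hsiglt : sigm ρ t < u := by
      cases' abs_lt.mp hsig with h1 h2
      linarith
    rcases ht with ht | ht
    · exact absurd ht.2 (not_lt.mpr hsiglt.le)
    · rw [mem_singleton_iff] at ht
      rw [ht, h.sigm_one] at hsiglt
      exact absurd hu.2 (not_le.mpr hsiglt)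

lemma Dat.phim_one (h : Dat ρ) : phim ρ 1 = 1 := by
  have : {t | t ∈ Icc (0:ℝ) 1 ∧ (1:ℝ) < sigm ρ t} ∪ {1} = {1} := by
    apply Subset.antisymm
    · rintro t (ht | ht)
      · exact absurd ht.2 (not_lt.mpr (h.sigm_le_one t))
      · exact ht
    · exact subset_union_right
  rw [phim, this, csInf_singleton]

lemma Dat.phim_strictMono (h : Dat ρ) : StrictMonoOn (phim ρ) (Icc 0 1) := by
  intro u hu v hv huv
  -- find intermediate points by IVT
  have hsub1 : (2*u+v)/3 ∈ Icc (sigm ρ 0) (sigm ρ 1) := by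
    rw [h.sigm_zero, h.sigm_one]
    constructor <;> [linarith [hu.1]; linarith [hv.2]]
  have hsub2 : (u+2*v)/3 ∈ Icc (sigm ρ 0) (sigm ρ 1) := by
    rw [h.sigm_zero, h.sigm_one]
    constructor <;> [linarith [hu.1]; linarith [hv.2]]
  obtain ⟨t₁, ht₁mem, ht₁⟩ := intermediate_value_Icc (by norm_num : (0:ℝ) ≤ 1)
    (h.sigm_cont.continuousOn) hsub1
  obtain ⟨t₂, ht₂mem, ht₂⟩ := intermediate_value_Icc (by norm_num : (0:ℝ) ≤ 1)
    (h.sigm_cont.continuousOn) hsub2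
  have h1 : phim ρ u ≤ t₁ := phim_le ht₁mem (by rw [ht₁]; linarith)
  have h12 : t₁ < t₂ := by
    by_contra hc
    push_neg at hc
    have := h.sigm_mono hc
    rw [ht₁, ht₂] at this
    linarith
  have h2 : t₂ ≤ phim ρ v := by
    apply le_csInf (phim_set_nonempty ρ v)
    rintro t (ht | ht)
    · by_contra hc
      push_neg at hc
      have := h.sigm_mono hc.le
      rw [ht₂] at this
      have := ht.2
      linarith
    · rw [mem_singleton_iff] at ht
      rw [ht]; exact ht₂mem.2
  linarith

lemma Dat.phim_rightCont (h : Dat ρ) (s : ℝ) :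
    ContinuousWithinAt (phim ρ) (Ici s) s := by
  rw [Metric.continuousWithinAt_iff]
  intro ε hε
  -- find δ with phim (s + δ) < phim s + ε
  have hinf : sInf ({t | t ∈ Icc (0:ℝ) 1 ∧ s < sigm ρ t} ∪ {1}) = phim ρ s := rfl
  obtain ⟨t, ht, htlt⟩ := exists_lt_of_csInf_lt (phim_set_nonempty ρ s)
    (show sInf _ < phim ρ s + ε by rw [hinf]; linarith)
  have key : ∃ δ > 0, phim ρ (s + δ) < phim ρ s + ε := by
    rcases ht with ht | ht
    · refine ⟨(sigm ρ t - s)/2, by linarith [ht.2], ?_⟩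
      calc phim ρ (s + (sigm ρ t - s)/2) ≤ t := phim_le ht.1 (by linarith [ht.2])
      _ < phim ρ s + ε := htlt
    · rw [mem_singleton_iff] at ht
      refine ⟨1, by norm_num, ?_⟩
      calc phim ρ (s + 1) ≤ 1 := (phim_mem ρ _).2
      _ < phim ρ s + ε := by rw [← ht]; exact htlt
  obtain ⟨δ, hδpos, hδ⟩ := key
  refine ⟨δ, hδpos, fun y hy hdist => ?_⟩
  have hys : s ≤ y := hy
  have hyδ : y ≤ s + δ := by
    rw [Real.dist_eq, abs_of_nonneg (by linarith)] at hdist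
    linarith
  have h1 : phim ρ s ≤ phim ρ y := phim_mono ρ hys
  have h2 : phim ρ y ≤ phim ρ (s + δ) := phim_mono ρ hyδ
  rw [Real.dist_eq, abs_of_nonneg (by linarith)]
  linarith

end Stmt19Aux

/-! ### hext lemmas -/

namespace Stmt19Aux

open Filter Topology

def hextDef {d : ℕ} (f : Proj d → ℝ) (v : Euc d) : ℝ :=
  haveI := Classical.propDecidable (v = 0)
  if hv : v = 0 then 0 else ‖v‖ * f (projQ
    ⟨‖v‖⁻¹ • v, by
      rw [mem_sphere_zero_iff_norm, norm_smul, norm_inv, norm_norm,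
        inv_mul_cancel₀ (norm_ne_zero_iff.mpr hv)]⟩)

lemma hext_zero {d : ℕ} (f : Proj d → ℝ) : hextDef f 0 = 0 := by
  simp [hextDef]

lemma hext_smul {d : ℕ} (f : Proj d → ℝ) (v : Euc d) {c : ℝ} (hc : 0 ≤ c) :
    hextDef f (c • v) = c * hextDef f v := by
  rcases eq_or_lt_of_le hc with hc0 | hc0
  · rw [← hc0, zero_smul, zero_mul, hext_zero]
  by_cases hv : v = 0
  · rw [hv, smul_zero, hext_zero, mul_zero]
  have hcv : c • v ≠ 0 := smul_ne_zero (ne_of_gt hc0) hv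
  rw [hextDef, hextDef, dif_neg hcv, dif_neg hv]
  have hnorm : ‖c • v‖ = c * ‖v‖ := by
    rw [norm_smul, Real.norm_eq_abs, abs_of_pos hc0]
  have harg : (‖c • v‖⁻¹ • (c • v) : Euc d) = ‖v‖⁻¹ • v := by
    rw [hnorm, smul_smul, mul_inv]
    rw [mul_assoc, mul_comm (‖v‖⁻¹) c, ← mul_assoc, inv_mul_cancel₀ (ne_of_gt hc0), one_mul]
  have hpt : (projQ (d := d) ⟨‖c • v‖⁻¹ • (c • v), by
      rw [mem_sphere_zero_iff_norm, norm_smul, norm_inv, norm_norm,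
        inv_mul_cancel₀ (norm_ne_zero_iff.mpr hcv)]⟩) = projQ ⟨‖v‖⁻¹ • v, by
      rw [mem_sphere_zero_iff_norm, norm_smul, norm_inv, norm_norm,
        inv_mul_cancel₀ (norm_ne_zero_iff.mpr hv)]⟩ := by
    congr 1
    exact Subtype.ext harg
  rw [hpt, hnorm, mul_assoc]

lemma hext_bound {d : ℕ} {f : Proj d → ℝ} {C : ℝ} (hC : 0 ≤ C)
    (hb : ∀ p, |f p| ≤ C) (v : Euc d) : |hextDef f v| ≤ C * ‖v‖ := by
  by_cases hv : v = 0
  · simp [hv, hext_zero]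
  rw [hextDef, dif_neg hv, abs_mul, abs_norm]
  rw [mul_comm C ‖v‖]
  exact mul_le_mul_of_nonneg_left (hb _) (norm_nonneg v)

lemma continuous_hext {d : ℕ} {f : Proj d → ℝ} (hf : Continuous f) :
    Continuous (hextDef f) := by
  rw [continuous_iff_continuousAt]
  intro v₀
  by_cases hv₀ : v₀ = 0
  · -- continuity at zero via bound
    obtain ⟨C, hC⟩ := isCompact_univ.exists_bound_of_continuousOn
      (f := f) hf.continuousOn
    set C' := max C 0 with hC'
    have hC'0 : 0 ≤ C' := le_max_right _ _
    have hb : ∀ p, |f p| ≤ C' := fun p =>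
      le_trans (by simpa using hC p (mem_univ p)) (le_max_left _ _)
    rw [hv₀, ContinuousAt]
    rw [hext_zero]
    rw [tendsto_iff_dist_tendsto_zero]
    apply squeeze_zero (fun v => dist_nonneg) (g := fun v => C' * ‖v‖)
    · intro v
      rw [Real.dist_eq, sub_zero]
      exact hext_bound hC'0 hb v
    · have h1 : Filter.Tendsto (fun v : Euc d => ‖v‖) (𝓝 0) (𝓝 0) := by
        simpa using (continuous_norm (E := Euc d)).tendsto 0
      simpa using h1.const_mul C'
  · -- continuity away from zero
    have hopen : IsOpen {v : Euc d | v ≠ 0} := isOpen_ne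
    apply ContinuousOn.continuousAt _ (hopen.mem_nhds hv₀)
    rw [continuousOn_iff_continuous_restrict]
    have hval : Continuous fun x : {v : Euc d | v ≠ 0} => x.1 := continuous_subtype_val
    have hne : ∀ x : {v : Euc d | v ≠ 0}, x.1 ≠ 0 := fun x => x.2
    have hcs : Continuous fun x : {v : Euc d | v ≠ 0} =>
        (⟨‖x.1‖⁻¹ • x.1, by
          rw [mem_sphere_zero_iff_norm, norm_smul, norm_inv, norm_norm,
            inv_mul_cancel₀ (norm_ne_zero_iff.mpr (hne x))]⟩ : Sph d) := by
      apply Continuous.subtype_mk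
      exact (hval.norm.inv₀ (fun x => norm_ne_zero_iff.mpr (hne x))).smul hval
    have hres : (Set.restrict {v : Euc d | v ≠ 0} (hextDef f)) =
        fun x : {v : Euc d | v ≠ 0} => ‖x.1‖ * f (projQ
          ⟨‖x.1‖⁻¹ • x.1, by
            rw [mem_sphere_zero_iff_norm, norm_smul, norm_inv, norm_norm,
              inv_mul_cancel₀ (norm_ne_zero_iff.mpr (hne x))]⟩) := by
      funext x
      show hextDef f x.1 = _
      rw [hextDef, dif_neg (hne x)]
    show Continuous (Set.restrict {v : Euc d | v ≠ 0} (hextDef f))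
    rw [hres]
    exact hval.norm.mul ((hf.comp (continuous_projQ (d := d))).comp hcs)

/-- Uniqueness of finite Borel measures on `Proj d` from integrals of continuous functions. -/
lemma measure_unique_proj {d : ℕ} (μ ν : Measure (Proj d))
    [IsFiniteMeasure μ] [IsFiniteMeasure ν]
    (h : ∀ f : Proj d → ℝ, Continuous f → ∫ x, f x ∂μ = ∫ x, f x ∂ν) : μ = ν := by
  apply MeasureTheory.ext_of_forall_lintegral_eq_of_IsFiniteMeasure
  intro f
  have h1 := f.lintegral_lt_top_of_nnreal μ
  have h2 := f.lintegral_lt_top_of_nnreal ν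
  rw [← ENNReal.toReal_eq_toReal_iff' h1.ne h2.ne,
    BoundedContinuousFunction.toReal_lintegral_coe_eq_integral,
    BoundedContinuousFunction.toReal_lintegral_coe_eq_integral]
  exact h _ (NNReal.continuous_coe.comp f.continuous)




/-! ### Pushforward of Lebesgue measure under `phim` -/

/-- The measure `(ρ/L) dλ` on `[0,1]`. -/
def nuM (ρ : ℝ → ℝ) : Measure ℝ :=
  (volume.restrict (Icc 0 1)).withDensity (fun t => ENNReal.ofReal (ρ t / Lv ρ))

lemma phim_measurable (ρ : ℝ → ℝ) : Measurable (phim ρ) := (phim_mono ρ).measurable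

lemma Dat.lint_Icc (h : Dat ρ) {a : ℝ} (ha : a ∈ Icc (0:ℝ) 1) :
    ∫⁻ t in Icc 0 a, ENNReal.ofReal (ρ t / Lv ρ) = ENNReal.ofReal (sigm ρ a) := by
  rw [← MeasureTheory.ofReal_integral_eq_lintegral_ofReal
    ((h.int.div_const (Lv ρ)).integrableOn)
    (Filter.Eventually.of_forall (fun t => div_nonneg (h.nonneg t) (le_of_lt h.pos)))]
  congr 1
  rw [MeasureTheory.integral_div]
  rw [MeasureTheory.setIntegral_congr_set Ioc_ae_eq_Icc.symm]
  rw [sigm, intervalIntegral.integral_of_le ha.1]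

lemma Dat.nuM_ac (h : Dat ρ) : nuM ρ ≪ volume.restrict (Icc 0 1) :=
  withDensity_absolutelyContinuous _ _

lemma Dat.nuM_univ (h : Dat ρ) : nuM ρ univ = ENNReal.ofReal 1 := by
  rw [nuM, withDensity_apply _ MeasurableSet.univ, setLIntegral_univ]
  have := h.lint_Icc (a := 1) (by norm_num : (1:ℝ) ∈ Icc (0:ℝ) 1)
  rw [this, h.sigm_one]

lemma Dat.nuM_apply (h : Dat ρ) {A : Set ℝ} (hA : MeasurableSet A) :
    nuM ρ A = ∫⁻ t in A ∩ Icc 0 1, ENNReal.ofReal (ρ t / Lv ρ) := by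
  rw [nuM, withDensity_apply _ hA, Measure.restrict_restrict hA]

lemma Dat.map_phim (h : Dat ρ) :
    Measure.map (phim ρ) (volume.restrict (Icc 0 1)) = nuM ρ := by
  have hfin2 : IsFiniteMeasure (nuM ρ) := by
    constructor
    rw [h.nuM_univ]
    exact ENNReal.ofReal_lt_top
  have hfin1 : IsFiniteMeasure (Measure.map (phim ρ) (volume.restrict (Icc 0 1))) := by
    constructor
    rw [Measure.map_apply (phim_measurable ρ) MeasurableSet.univ, preimage_univ,
      Measure.restrict_apply MeasurableSet.univ, univ_inter]
    exact measure_Icc_lt_top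
  apply Measure.ext_of_Iic
  intro a
  rw [Measure.map_apply (phim_measurable ρ) measurableSet_Iic,
    Measure.restrict_apply (measurableSet_Iic.preimage (phim_measurable ρ)),
    h.nuM_apply measurableSet_Iic]
  rcases lt_or_ge a 0 with ha | ha
  · have h1 : phim ρ ⁻¹' Iic a ∩ Icc 0 1 = ∅ := by
      apply eq_empty_of_forall_notMem
      intro u hu
      have := (phim_mem ρ u).1
      have : phim ρ u ≤ a := hu.1
      linarith [(phim_mem ρ u).1]
    have h2 : Iic a ∩ Icc (0:ℝ) 1 = ∅ := by
      apply eq_empty_of_forall_notMem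
      intro u hu
      have h3 : u ≤ a := hu.1
      linarith [hu.2.1]
    rw [h1, h2]
    simp
  rcases le_or_gt a 1 with ha1 | ha1
  · -- 0 ≤ a ≤ 1
    have hmem : a ∈ Icc (0:ℝ) 1 := ⟨ha, ha1⟩
    have h2 : Iic a ∩ Icc (0:ℝ) 1 = Icc 0 a := by
      ext x
      constructor
      · rintro ⟨hx1, hx2, hx3⟩
        exact ⟨hx2, hx1⟩
      · rintro ⟨hx1, hx2⟩
        exact ⟨hx2, hx1, le_trans hx2 ha1⟩
    rw [h2, h.lint_Icc hmem]
    -- sandwich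
    apply le_antisymm
    · have hsub : phim ρ ⁻¹' Iic a ∩ Icc 0 1 ⊆ Icc 0 (sigm ρ a) := by
        rintro u ⟨hu1, hu2⟩
        refine ⟨hu2.1, ?_⟩
        calc u = sigm ρ (phim ρ u) := (h.sigm_phim hu2).symm
        _ ≤ sigm ρ a := h.sigm_mono hu1
      calc volume (phim ρ ⁻¹' Iic a ∩ Icc 0 1)
          ≤ volume (Icc 0 (sigm ρ a)) := measure_mono hsub
        _ = ENNReal.ofReal (sigm ρ a) := by rw [Real.volume_Icc, sub_zero]
    · have hsub : Ico 0 (sigm ρ a) ⊆ phim ρ ⁻¹' Iic a ∩ Icc 0 1 := by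
        rintro u ⟨hu1, hu2⟩
        refine ⟨phim_le hmem hu2, hu1, ?_⟩
        linarith [h.sigm_le_one a]
      calc ENNReal.ofReal (sigm ρ a)
          = volume (Ico 0 (sigm ρ a)) := by rw [Real.volume_Ico, sub_zero]
        _ ≤ volume (phim ρ ⁻¹' Iic a ∩ Icc 0 1) := measure_mono hsub
  · -- 1 < a
    have h1 : phim ρ ⁻¹' Iic a ∩ Icc 0 1 = Icc 0 1 := by
      apply inter_eq_right.mpr
      intro u hu
      show phim ρ u ≤ a
      linarith [(phim_mem ρ u).2]
    have h2 : Iic a ∩ Icc (0:ℝ) 1 = Icc 0 1 := by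
      apply inter_eq_right.mpr
      intro u hu
      show u ≤ a
      linarith [hu.2]
    rw [h1, h2]
    have h3 : Icc (0:ℝ) 1 = Icc (0:ℝ) (1:ℝ) := rfl
    rw [h.lint_Icc (a := 1) (by norm_num), h.sigm_one, Real.volume_Icc, sub_zero]

/-- Transfer of a.e. properties along `phim`. -/
lemma Dat.ae_phim (h : Dat ρ) {P : ℝ → Prop}
    (hP : ∀ᵐ t ∂(volume.restrict (Icc 0 1)), P t) :
    ∀ᵐ s ∂(volume.restrict (Icc 0 1)), P (phim ρ s) := by
  obtain ⟨N, hNsub, hNmeas, hNnull⟩ :=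
    exists_measurable_superset_of_null (μ := volume.restrict (Icc 0 1))
      (s := {t | ¬ P t}) hP
  have hnu : nuM ρ N = 0 := h.nuM_ac hNnull
  have hmap : (volume.restrict (Icc 0 1)) (phim ρ ⁻¹' N) = 0 := by
    rw [← Measure.map_apply (phim_measurable ρ) hNmeas, h.map_phim]
    exact hnu
  apply measure_mono_null _ hmap
  intro s hs
  exact hNsub hs

lemma Dat.ae_phim_ne (h : Dat ρ) :
    ∀ᵐ s ∂(volume.restrict (Icc 0 1)), ρ (phim ρ s) ≠ 0 := by
  have hZ : MeasurableSet {t : ℝ | ρ t = 0} := h.meas (measurableSet_singleton 0)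
  have hnu : nuM ρ {t | ρ t = 0} = 0 := by
    rw [h.nuM_apply hZ]
    rw [MeasureTheory.setLIntegral_congr_fun (hZ.inter measurableSet_Icc)
      (fun t ht => ?_), lintegral_zero]
    rw [ht.1, zero_div]
    simp
  have hmap : (volume.restrict (Icc 0 1)) (phim ρ ⁻¹' {t | ρ t = 0}) = 0 := by
    rw [← Measure.map_apply (phim_measurable ρ) hZ, h.map_phim]
    exact hnu
  rw [MeasureTheory.ae_iff]
  apply measure_mono_null _ hmap
  intro s hs
  simpa using hs

/-- Change of variables via the pushforward. -/
lemma Dat.integral_phim (h : Dat ρ) {E : Type*} [NormedAddCommGroup E] [NormedSpace ℝ E]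
    {w : ℝ → E} (hw : AEStronglyMeasurable w (volume.restrict (Icc 0 1))) :
    ∫ s in Icc (0:ℝ) 1, w (phim ρ s) = ∫ t in Icc (0:ℝ) 1, (ρ t / Lv ρ) • w t := by
  have hwn : AEStronglyMeasurable w (nuM ρ) := hw.mono_ac h.nuM_ac
  have hwm : AEStronglyMeasurable w (Measure.map (phim ρ) (volume.restrict (Icc 0 1))) := by
    rw [h.map_phim]; exact hwn
  have h1 : ∫ s in Icc (0:ℝ) 1, w (phim ρ s) = ∫ t, w t ∂(nuM ρ) := by
    rw [← h.map_phim, integral_map (phim_measurable ρ).aemeasurable hwm]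
  rw [h1]
  have hδ : Measurable fun t => Real.toNNReal (ρ t / Lv ρ) :=
    (h.meas.div_const _).real_toNNReal
  have h2 : nuM ρ = (volume.restrict (Icc 0 1)).withDensity
      (fun t => (Real.toNNReal (ρ t / Lv ρ) : ℝ≥0∞)) := rfl
  rw [h2, integral_withDensity_eq_integral_smul hδ]
  apply MeasureTheory.setIntegral_congr_fun measurableSet_Icc
  intro t ht
  show (ρ t / Lv ρ).toNNReal • w t = (ρ t / Lv ρ) • w t
  have hc : ((ρ t / Lv ρ).toNNReal : ℝ) = ρ t / Lv ρ :=
    Real.coe_toNNReal (ρ t / Lv ρ) (div_nonneg (h.nonneg t) h.pos.le)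
  rw [NNReal.smul_def, hc]

/-- Integrability transfer along `phim`. -/
lemma Dat.integrable_phim (h : Dat ρ) {E : Type*} [NormedAddCommGroup E] [NormedSpace ℝ E]
    {w : ℝ → E} (hw : AEStronglyMeasurable w (volume.restrict (Icc 0 1)))
    (hwi : Integrable (fun t => (ρ t / Lv ρ) • w t) (volume.restrict (Icc 0 1))) :
    Integrable (fun s => w (phim ρ s)) (volume.restrict (Icc 0 1)) := by
  have hwn : AEStronglyMeasurable w (nuM ρ) := hw.mono_ac h.nuM_ac
  have hwm : AEStronglyMeasurable w (Measure.map (phim ρ) (volume.restrict (Icc 0 1))) := by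
    rw [h.map_phim]; exact hwn
  have : Integrable w (Measure.map (phim ρ) (volume.restrict (Icc 0 1))) := by
    rw [h.map_phim]
    have hδ : Measurable fun t => Real.toNNReal (ρ t / Lv ρ) :=
      (h.meas.div_const _).real_toNNReal
    have h2 : nuM ρ = (volume.restrict (Icc 0 1)).withDensity
        (fun t => (Real.toNNReal (ρ t / Lv ρ) : ℝ≥0∞)) := rfl
    rw [h2, integrable_withDensity_iff_integrable_smul hδ]
    apply hwi.congr
    filter_upwards with t
    show (ρ t / Lv ρ) • w t = (ρ t / Lv ρ).toNNReal • w t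
    have hc : ((ρ t / Lv ρ).toNNReal : ℝ) = ρ t / Lv ρ :=
      Real.coe_toNNReal (ρ t / Lv ρ) (div_nonneg (h.nonneg t) h.pos.le)
    rw [NNReal.smul_def, hc]
  exact (integrable_map_measure hwm (phim_measurable ρ).aemeasurable).mp this


/-! ### The master substitution lemma -/

/-- The reparametrized derivative. -/
def Hfun (ρ : ℝ → ℝ) {E : Type*} [NormedAddCommGroup E] [NormedSpace ℝ E]
    (G : ℝ → E) (s : ℝ) : E :=
  if ρ (phim ρ s) = 0 then 0 else (Lv ρ / ρ (phim ρ s)) • G (phim ρ s)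

lemma Dat.master {E : Type*} [NormedAddCommGroup E] [NormedSpace ℝ E]
    (h : Dat ρ) {G : ℝ → E} (hGi : IntegrableOn G (Icc 0 1) volume)
    (hG0 : ∀ᵐ t ∂volume.restrict (Icc 0 1), ρ t = 0 → G t = 0) :
    IntegrableOn (Hfun ρ G) (Icc 0 1) volume ∧
    ∀ u ∈ Icc (0:ℝ) 1, ∫ s in (0:ℝ)..u, Hfun ρ G s = ∫ t in (0:ℝ)..(phim ρ u), G t := by
  set c : ℝ → ℝ := fun t => if ρ t = 0 then (0:ℝ) else Lv ρ / ρ t with hc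
  set w : ℝ → E := fun t => c t • G t with hwdef
  have hHw : ∀ s, Hfun ρ G s = w (phim ρ s) := fun s => by
    rw [Hfun, hwdef]
    by_cases hρ : ρ (phim ρ s) = 0
    · simp only [hc, if_pos hρ, zero_smul]
    · simp only [hc, if_neg hρ]
  have hc_meas : Measurable c :=
    Measurable.ite (h.meas (measurableSet_singleton 0)) measurable_const
      (measurable_const.div h.meas)
  have hw_aesm : AEStronglyMeasurable w (volume.restrict (Icc 0 1)) :=
    (hc_meas.aestronglyMeasurable).smul hGi.1
  have hkey : (fun t => (ρ t / Lv ρ) • w t) =ᶠ[ae (volume.restrict (Icc 0 1))] G := by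
    filter_upwards [hG0] with t hG0t
    by_cases hρ : ρ t = 0
    · show (ρ t / Lv ρ) • w t = G t
      rw [hwdef]
      simp only [hc, if_pos hρ, zero_smul, smul_zero, hG0t hρ]
    · show (ρ t / Lv ρ) • w t = G t
      rw [hwdef]
      simp only [hc, if_neg hρ]
      have hmu : (ρ t / Lv ρ) * (Lv ρ / ρ t) = 1 := by
        rw [div_mul_div_comm, mul_comm]
        exact div_self (mul_ne_zero h.pos.ne' hρ)
      rw [smul_smul, hmu, one_smul]
  have hwsi : Integrable (fun t => (ρ t / Lv ρ) • w t) (volume.restrict (Icc 0 1)) :=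
    hGi.congr hkey.symm
  have hHint : IntegrableOn (Hfun ρ G) (Icc 0 1) volume := by
    have := h.integrable_phim hw_aesm hwsi
    apply this.congr
    filter_upwards with s
    exact (hHw s).symm
  refine ⟨hHint, fun u hu => ?_⟩
  have hφu := phim_mem ρ u
  -- rewrite both sides as set integrals over Icc
  rw [intervalIntegral.integral_of_le hu.1,
    MeasureTheory.setIntegral_congr_set Ioc_ae_eq_Icc,
    intervalIntegral.integral_of_le hφu.1,
    MeasureTheory.setIntegral_congr_set Ioc_ae_eq_Icc]
  have hsub : Icc (0:ℝ) 1 ∩ Icc 0 u = Icc 0 u := by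
    apply inter_eq_right.mpr
    exact Icc_subset_Icc_right hu.2
  rw [← hsub, ← MeasureTheory.setIntegral_indicator measurableSet_Icc]
  set w' : ℝ → E := (Icc (0:ℝ) (phim ρ u)).indicator w with hw'def
  have hstep3 : ∀ s ∈ Icc (0:ℝ) 1,
      (Icc (0:ℝ) u).indicator (Hfun ρ G) s = w' (phim ρ s) := by
    intro s hs
    have hiff : s ∈ Icc (0:ℝ) u ↔ phim ρ s ∈ Icc (0:ℝ) (phim ρ u) := by
      constructor
      · intro hsu
        exact ⟨(phim_mem ρ s).1, phim_mono ρ hsu.2⟩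
      · intro hφ
        refine ⟨hs.1, ?_⟩
        by_contra hc'
        push_neg at hc'
        have := h.phim_strictMono hu hs hc'
        linarith [hφ.2]
    rw [hw'def]
    by_cases hsu : s ∈ Icc (0:ℝ) u
    · rw [indicator_of_mem hsu, indicator_of_mem (hiff.mp hsu), hHw]
    · rw [indicator_of_notMem hsu, indicator_of_notMem (fun hcon => hsu (hiff.mpr hcon))]
  rw [MeasureTheory.setIntegral_congr_fun measurableSet_Icc hstep3]
  have hw'_aesm : AEStronglyMeasurable w' (volume.restrict (Icc 0 1)) :=
    hw_aesm.indicator measurableSet_Icc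
  rw [h.integral_phim hw'_aesm]
  have hstep5 : ∀ t ∈ Icc (0:ℝ) 1, (ρ t / Lv ρ) • w' t =
      (Icc (0:ℝ) (phim ρ u)).indicator (fun t => (ρ t / Lv ρ) • w t) t := by
    intro t ht
    rw [hw'def]
    by_cases htm : t ∈ Icc (0:ℝ) (phim ρ u)
    · rw [indicator_of_mem htm, indicator_of_mem htm]
    · rw [indicator_of_notMem htm, indicator_of_notMem htm, smul_zero]
  rw [MeasureTheory.setIntegral_congr_fun measurableSet_Icc hstep5,
    MeasureTheory.setIntegral_indicator measurableSet_Icc,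
    show Icc (0:ℝ) 1 ∩ Icc 0 (phim ρ u) = Icc 0 (phim ρ u) from
      inter_eq_right.mpr (Icc_subset_Icc_right hφu.2)]
  apply MeasureTheory.integral_congr_ae
  exact ae_restrict_of_ae_restrict_of_subset (Icc_subset_Icc_right hφu.2) hkey

/-! ### Almost everywhere differentiability of `phim` -/

lemma Dat.ae_hasDeriv_sigm (h : Dat ρ) :
    ∀ᵐ t ∂(volume : Measure ℝ), HasDerivAt (sigm ρ) (ρ t / Lv ρ) t := by
  have hloc : LocallyIntegrable (fun y => ρ y / Lv ρ) volume :=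
    (h.int.div_const _).locallyIntegrable
  filter_upwards [(Besicovitch.vitaliFamily (volume : Measure ℝ)).ae_tendsto_average_norm_sub
    hloc] with t ht
  have hball : Tendsto (fun r => ⨍ y in Metric.closedBall t r, ‖ρ y / Lv ρ - ρ t / Lv ρ‖)
      (𝓝[>] 0) (𝓝 0) := ht.comp (Besicovitch.tendsto_filterAt volume t)
  rw [hasDerivAt_iff_tendsto_slope]
  have hInt : ∀ r : ℝ, IntegrableOn (fun y => ‖ρ y / Lv ρ - ρ t / Lv ρ‖)
      (Metric.closedBall t r) volume :=
    fun r => (((h.int.div_const (Lv ρ)).integrableOn.sub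
      (integrableOn_const measure_closedBall_lt_top.ne)).norm)
  have hbound : ∀ t' : ℝ, t' ≠ t → |slope (sigm ρ) t t' - ρ t / Lv ρ| ≤
      2 * ⨍ y in Metric.closedBall t |t' - t|, ‖ρ y / Lv ρ - ρ t / Lv ρ‖ := by
    intro t' hne
    have hne' : t' - t ≠ 0 := sub_ne_zero.mpr hne
    have hr : 0 < |t' - t| := abs_pos.mpr hne'
    have hdiff : sigm ρ t' - sigm ρ t = ∫ y in t..t', ρ y / Lv ρ := by
      rw [sigm, sigm, intervalIntegral.integral_div, div_sub_div_same]
      congr 1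
      have h4 := intervalIntegral.integral_add_adjacent_intervals (h.ii 0 t) (h.ii t t')
      linarith [h4]
    have hsplit : (∫ y in t..t', (ρ y / Lv ρ - ρ t / Lv ρ)) =
        (∫ y in t..t', ρ y / Lv ρ) - (t' - t) * (ρ t / Lv ρ) := by
      rw [intervalIntegral.integral_sub ((h.int.div_const (Lv ρ)).intervalIntegrable)
        intervalIntegrable_const, intervalIntegral.integral_const, smul_eq_mul]
    have hslope : slope (sigm ρ) t t' - ρ t / Lv ρ =
        (∫ y in t..t', (ρ y / Lv ρ - ρ t / Lv ρ)) / (t' - t) := by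
      rw [slope_def_field, hdiff, hsplit, sub_div, mul_div_cancel_left₀ _ hne']
    rw [hslope, abs_div]
    rw [div_le_iff₀ hr]
    have hIoc : Set.uIoc t t' ⊆ Metric.closedBall t |t' - t| := by
      intro y hy
      rw [Metric.mem_closedBall, Real.dist_eq]
      rcases le_total t t' with hle | hle
      · rw [uIoc_of_le hle] at hy
        rw [abs_of_nonneg (by linarith [hy.1.le]), abs_of_nonneg (by linarith)]
        linarith [hy.2]
      · rw [uIoc_of_ge hle] at hy
        rw [abs_of_nonpos (by linarith [hy.2]), abs_of_nonpos (by linarith)]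
        linarith [hy.1]
    have h1 : |∫ y in t..t', (ρ y / Lv ρ - ρ t / Lv ρ)| ≤
        ∫ y in Set.uIoc t t', ‖ρ y / Lv ρ - ρ t / Lv ρ‖ := by
      rw [← Real.norm_eq_abs]
      exact intervalIntegral.norm_integral_le_integral_norm_uIoc
    have h2 : (∫ y in Set.uIoc t t', ‖ρ y / Lv ρ - ρ t / Lv ρ‖) ≤
        ∫ y in Metric.closedBall t |t' - t|, ‖ρ y / Lv ρ - ρ t / Lv ρ‖ := by
      apply MeasureTheory.setIntegral_mono_set (hInt _)
      · filter_upwards with y using norm_nonneg _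
      · exact HasSubset.Subset.eventuallyLE hIoc
    have h3 : (∫ y in Metric.closedBall t |t' - t|, ‖ρ y / Lv ρ - ρ t / Lv ρ‖) =
        (2 * |t' - t|) * ⨍ y in Metric.closedBall t |t' - t|, ‖ρ y / Lv ρ - ρ t / Lv ρ‖ := by
      rw [MeasureTheory.setAverage_eq, Real.volume_real_closedBall (by linarith), smul_eq_mul, ← mul_assoc,
        mul_inv_cancel₀ (by linarith), one_mul]
    calc |∫ y in t..t', (ρ y / Lv ρ - ρ t / Lv ρ)|
        ≤ ∫ y in Set.uIoc t t', ‖ρ y / Lv ρ - ρ t / Lv ρ‖ := h1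
      _ ≤ ∫ y in Metric.closedBall t |t' - t|, ‖ρ y / Lv ρ - ρ t / Lv ρ‖ := h2
      _ = (2 * |t' - t|) * ⨍ y in Metric.closedBall t |t' - t|,
            ‖ρ y / Lv ρ - ρ t / Lv ρ‖ := h3
      _ = 2 * (⨍ y in Metric.closedBall t |t' - t|,
            ‖ρ y / Lv ρ - ρ t / Lv ρ‖) * |t' - t| := by ring
  have habs : Tendsto (fun t' => |t' - t|) (𝓝[≠] t) (𝓝[>] 0) := by
    rw [tendsto_nhdsWithin_iff]
    constructor
    · have h5 : Tendsto (fun t' : ℝ => |t' - t|) (𝓝 t) (𝓝 |t - t|) :=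
        ((continuous_id.sub continuous_const).abs).tendsto t
      simpa using h5.mono_left nhdsWithin_le_nhds
    · filter_upwards [self_mem_nhdsWithin] with t' ht'
      exact abs_pos.mpr (sub_ne_zero.mpr ht')
  have htend : Tendsto (fun t' => 2 * ⨍ y in Metric.closedBall t |t' - t|,
      ‖ρ y / Lv ρ - ρ t / Lv ρ‖) (𝓝[≠] t) (𝓝 0) := by
    have h6 := (hball.comp habs).const_mul (2:ℝ)
    simpa using h6
  rw [tendsto_iff_dist_tendsto_zero]
  refine squeeze_zero' (Filter.Eventually.of_forall (fun t' => dist_nonneg)) ?_ htend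
  filter_upwards [self_mem_nhdsWithin] with t' ht'
  rw [Real.dist_eq]
  exact hbound t' ht'


lemma Dat.ae_deriv_phim (h : Dat ρ) :
    ∀ᵐ s ∂(volume.restrict (Icc 0 1)),
      ρ (phim ρ s) ≠ 0 ∧ HasDerivAt (phim ρ) (Lv ρ / ρ (phim ρ s)) s := by
  have hgood : ∀ᵐ s ∂(volume.restrict (Icc 0 1)),
      HasDerivAt (sigm ρ) (ρ (phim ρ s) / Lv ρ) (phim ρ s) :=
    h.ae_phim (P := fun t => HasDerivAt (sigm ρ) (ρ t / Lv ρ) t)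
      (ae_restrict_of_ae h.ae_hasDeriv_sigm)
  have hne := h.ae_phim_ne
  have hcont : ∀ᵐ s ∂(volume.restrict (Icc 0 1)), ContinuousAt (phim ρ) s := by
    have hcnt : Set.Countable {s | ¬ContinuousAt (phim ρ) s} :=
      (phim_mono ρ).countable_not_continuousAt
    rw [MeasureTheory.ae_iff]
    apply le_antisymm _ zero_le
    calc (volume.restrict (Icc 0 1)) {s | ¬ContinuousAt (phim ρ) s}
        ≤ volume {s | ¬ContinuousAt (phim ρ) s} := Measure.restrict_le_self _
      _ = 0 := hcnt.measure_zero _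
  have hIoo : ∀ᵐ s ∂(volume.restrict (Icc 0 1)), s ∈ Ioo (0:ℝ) 1 := by
    rw [MeasureTheory.ae_iff]
    have hset : {a | a ∉ Ioo (0:ℝ) 1} = (Ioo (0:ℝ) 1)ᶜ := rfl
    rw [hset, Measure.restrict_apply (measurableSet_Ioo (a := (0:ℝ)) (b := (1:ℝ))).compl]
    have hmz : volume ({(0:ℝ), 1} : Set ℝ) = 0 :=
      ((Set.finite_singleton (1:ℝ)).insert 0).measure_zero volume
    apply measure_mono_null _ hmz
    rintro x ⟨hx1, hx2⟩
    simp only [mem_compl_iff, mem_Ioo, not_and_or, not_lt] at hx1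
    simp only [mem_insert_iff, mem_singleton_iff]
    rcases hx1 with hx | hx
    · exact Or.inl (le_antisymm hx hx2.1)
    · exact Or.inr (le_antisymm hx2.2 hx)
  filter_upwards [hgood, hne, hcont, hIoo] with s hg hn hc hio
  refine ⟨hn, ?_⟩
  have hsm : s ∈ Icc (0:ℝ) 1 := ⟨hio.1.le, hio.2.le⟩
  have hcpos : 0 < ρ (phim ρ s) := (h.nonneg _).lt_of_ne (Ne.symm hn)
  have hcL : 0 < ρ (phim ρ s) / Lv ρ := div_pos hcpos h.pos
  rw [hasDerivAt_iff_tendsto_slope]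
  have hσslope : Tendsto (slope (sigm ρ) (phim ρ s)) (𝓝[≠] (phim ρ s))
      (𝓝 (ρ (phim ρ s) / Lv ρ)) := hasDerivAt_iff_tendsto_slope.mp hg
  have hev : ∀ᶠ u in 𝓝[≠] s, u ∈ Ioo (0:ℝ) 1 ∧ u ≠ s := by
    apply Filter.Eventually.and
    · exact Filter.eventually_iff_exists_mem.mpr
        ⟨Ioo 0 1, nhdsWithin_le_nhds (isOpen_Ioo.mem_nhds hio), fun u hu => hu⟩
    · filter_upwards [self_mem_nhdsWithin] with u hu using hu
  have hφtendsto : Tendsto (phim ρ) (𝓝[≠] s) (𝓝[≠] (phim ρ s)) := by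
    rw [tendsto_nhdsWithin_iff]
    constructor
    · exact hc.tendsto.mono_left nhdsWithin_le_nhds
    · filter_upwards [hev] with u hu
      intro hcon
      exact hu.2 (h.phim_strictMono.injOn (Ioo_subset_Icc_self hu.1) hsm hcon)
  have hcomp : Tendsto (fun u => slope (sigm ρ) (phim ρ s) (phim ρ u)) (𝓝[≠] s)
      (𝓝 (ρ (phim ρ s) / Lv ρ)) := hσslope.comp hφtendsto
  have heq : ∀ᶠ u in 𝓝[≠] s, slope (sigm ρ) (phim ρ s) (phim ρ u) =
      (slope (phim ρ) s u)⁻¹ := by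
    filter_upwards [hev] with u hu
    rw [slope_def_field, slope_def_field, h.sigm_phim (Ioo_subset_Icc_self hu.1),
      h.sigm_phim hsm]
    rw [inv_div]
  have hinv : Tendsto (fun u => (slope (phim ρ) s u)⁻¹) (𝓝[≠] s)
      (𝓝 (ρ (phim ρ s) / Lv ρ)) := hcomp.congr' heq
  have hfinal := hinv.inv₀ (ne_of_gt hcL)
  rw [inv_div] at hfinal
  apply hfinal.congr
  intro u
  rw [inv_inv]


lemma hext_eq {d : ℕ} (f : Proj d → ℝ) : hext f = hextDef f := rfl

lemma II_to_Icc {E : Type*} [NormedAddCommGroup E] {f : ℝ → E}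
    (hf : IntervalIntegrable f volume 0 1) : IntegrableOn f (Icc 0 1) volume := by
  rw [IntegrableOn, ← Measure.restrict_congr_set Ioc_ae_eq_Icc]
  exact (intervalIntegrable_iff_integrableOn_Ioc_of_le (by norm_num)).mp hf

lemma Icc_to_II {E : Type*} [NormedAddCommGroup E] {f : ℝ → E}
    (hf : IntegrableOn f (Icc 0 1) volume) : IntervalIntegrable f volume 0 1 :=
  (intervalIntegrable_iff_integrableOn_Ioc_of_le (by norm_num)).mpr
    (hf.mono_set Ioc_subset_Icc_self)

end Stmt19Aux

open Stmt19Aux in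
/-- (Constant speed reparametrization.)  Let
`α : [0,1] → ℝ^d` be absolutely continuous.  There exists a right-continuous,
strictly monotonic `φ̃ : [0,1] → [0,1]` such that:
(i) for every absolutely continuous `F : [0,1] → ℝ^k` whose derivative
vanishes (a.e.) wherever `α'` does, `F ∘ φ̃` is absolutely continuous — in
particular `α ∘ φ̃` is absolutely continuous;
(ii) for a.e. `s`, the chain rule `(α∘φ̃)'(s) = α'(φ̃(s)) φ̃'(s)` holds and
`|(α∘φ̃)'(s)| = ‖α‖_AC` (constant speed);
(iii) `μ_{α∘φ̃} = μ_α`, and in particular `‖α∘φ̃‖_AC = ‖α‖_AC`. -/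
theorem stmt19 {d : ℕ} (hd : 1 ≤ d) (α g : ℝ → Euc d) (hα : IsACDeriv α g) :
    ∃ φ : ℝ → ℝ,
      StrictMonoOn φ (Icc 0 1) ∧
      MapsTo φ (Icc 0 1) (Icc 0 1) ∧
      (∀ s ∈ Icc (0:ℝ) 1, ContinuousWithinAt φ (Ici s) s) ∧
      -- (i)
      (∀ (k : ℕ) (F G : ℝ → Euc k), IsACDeriv F G →
        (∀ᵐ t ∂volume.restrict (Icc (0:ℝ) 1), g t = 0 → G t = 0) →
        ∃ H : ℝ → Euc k, IsACDeriv (fun s => F (φ s)) H) ∧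
      ∃ h : ℝ → Euc d, IsACDeriv (fun s => α (φ s)) h ∧
        -- (ii)
        (∀ᵐ s ∂volume.restrict (Icc (0:ℝ) 1),
          ∃ D : ℝ, HasDerivAt φ D s ∧ h s = D • g (φ s) ∧
            ‖h s‖ = ∫ t in (0:ℝ)..1, ‖g t‖) ∧
        -- (iii)
        (∀ (μ μ' : Measure (Proj d)),
          IsCurveMeasure g μ → IsCurveMeasure h μ' → μ' = μ) ∧
        (∫ s in (0:ℝ)..1, ‖h s‖) = ∫ t in (0:ℝ)..1, ‖g t‖ := by
  classical
  have hgI : IntervalIntegrable g volume 0 1 := hα.1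
  have hgIcc : IntegrableOn g (Icc 0 1) volume := II_to_Icc hgI
  by_cases hL : (∫ t in (0:ℝ)..1, ‖g t‖) = 0
  · -- degenerate case: g = 0 a.e., take φ = id
    refine ⟨fun s => s, fun x _ y _ hxy => hxy, fun x hx => hx,
      fun s _ => continuous_id.continuousWithinAt, ?_, g, hα, ?_, ?_, rfl⟩
    · intro k F G hF _
      exact ⟨G, hF⟩
    · -- (ii) in degenerate case
      have hg0 : ∀ᵐ t ∂(volume.restrict (Icc (0:ℝ) 1)), ‖g t‖ = 0 := by
        have hIoc : ∀ᵐ t ∂(volume.restrict (Ioc (0:ℝ) 1)), ‖g t‖ = 0 := by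
          have hint : Integrable (fun t => ‖g t‖) (volume.restrict (Ioc (0:ℝ) 1)) :=
            ((intervalIntegrable_iff_integrableOn_Ioc_of_le (by norm_num)).mp hgI).norm
          have h0 : ∫ t in Ioc (0:ℝ) 1, ‖g t‖ = 0 := by
            rw [← intervalIntegral.integral_of_le (by norm_num : (0:ℝ) ≤ 1)]
            exact hL
          have := (MeasureTheory.integral_eq_zero_iff_of_nonneg
            (fun t => norm_nonneg (g t)) hint).mp h0
          filter_upwards [this] with t ht
          exact ht
        rw [← Measure.restrict_congr_set Ioc_ae_eq_Icc]
        exact hIoc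
      filter_upwards [hg0] with s hs
      exact ⟨1, hasDerivAt_id s, (one_smul _ _).symm, by rw [hs, hL]⟩
    · -- (iii) in degenerate case
      intro μ μ' hμ hμ'
      haveI := hμ.1
      haveI := hμ'.1
      apply measure_unique_proj
      intro f hf
      rw [hμ'.2 f hf, hμ.2 f hf]
  · -- main case
    have hLg0 : 0 ≤ ∫ t in (0:ℝ)..1, ‖g t‖ :=
      intervalIntegral.integral_nonneg (by norm_num) (fun t _ => norm_nonneg _)
    have hLgpos : 0 < ∫ t in (0:ℝ)..1, ‖g t‖ := lt_of_le_of_ne hLg0 (Ne.symm hL)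
    -- measurable modification of the speed
    have hgnormIcc : IntegrableOn (fun t => ‖g t‖) (Icc 0 1) volume := hgIcc.norm
    have hw0int : Integrable ((Icc (0:ℝ) 1).indicator (fun t => ‖g t‖)) volume :=
      (MeasureTheory.IntegrableOn.integrable_indicator hgnormIcc measurableSet_Icc)
    set w1 : ℝ → ℝ := hw0int.1.mk _ with hw1def
    have hw1meas : StronglyMeasurable w1 := hw0int.1.stronglyMeasurable_mk
    have hw1eq : (Icc (0:ℝ) 1).indicator (fun t => ‖g t‖) =ᵐ[volume] w1 := hw0int.1.ae_eq_mk
    set ρ : ℝ → ℝ := fun t => if t ∈ Icc (0:ℝ) 1 then |w1 t| else 0 with hρdef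
    have hρmeas : Measurable ρ :=
      Measurable.ite measurableSet_Icc hw1meas.measurable.abs measurable_const
    have hρw0 : ρ =ᵐ[volume] (Icc (0:ℝ) 1).indicator (fun t => ‖g t‖) := by
      filter_upwards [hw1eq] with t ht
      by_cases htm : t ∈ Icc (0:ℝ) 1
      · show (if t ∈ Icc (0:ℝ) 1 then |w1 t| else 0) = _
        rw [if_pos htm, ← ht, indicator_of_mem htm, abs_of_nonneg (norm_nonneg _)]
      · show (if t ∈ Icc (0:ℝ) 1 then |w1 t| else 0) = _
        rw [if_neg htm, indicator_of_notMem htm]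
    have hρint : Integrable ρ volume := hw0int.congr hρw0.symm
    have hρnonneg : ∀ t, 0 ≤ ρ t := by
      intro t
      show 0 ≤ if t ∈ Icc (0:ℝ) 1 then |w1 t| else 0
      by_cases htm : t ∈ Icc (0:ℝ) 1
      · rw [if_pos htm]; exact abs_nonneg _
      · rw [if_neg htm]
    have hρsupp : ∀ t, t ∉ Icc (0:ℝ) 1 → ρ t = 0 := by
      intro t ht
      show (if t ∈ Icc (0:ℝ) 1 then |w1 t| else 0) = 0
      exact if_neg ht
    have hρL : (∫ t in (0:ℝ)..1, ρ t) = ∫ t in (0:ℝ)..1, ‖g t‖ := by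
      rw [intervalIntegral.integral_of_le (by norm_num : (0:ℝ) ≤ 1),
        intervalIntegral.integral_of_le (by norm_num : (0:ℝ) ≤ 1)]
      rw [MeasureTheory.integral_congr_ae (ae_restrict_of_ae hρw0)]
      apply MeasureTheory.setIntegral_congr_fun measurableSet_Ioc
      intro t ht
      exact indicator_of_mem (Ioc_subset_Icc_self ht) _
    have hDat : Dat ρ := ⟨hρmeas, hρnonneg, hρsupp, hρint, by rw [hρL]; exact hLgpos⟩
    have hLv : Lv ρ = ∫ t in (0:ℝ)..1, ‖g t‖ := hρL
    have hρg : ∀ᵐ t ∂(volume.restrict (Icc (0:ℝ) 1)), ρ t = ‖g t‖ := by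
      filter_upwards [ae_restrict_of_ae hρw0, ae_restrict_mem measurableSet_Icc] with t h1 h2
      rw [h1, indicator_of_mem h2]
    -- the master lemma applied to a general curve
    have masterAC : ∀ (E : Type) [NormedAddCommGroup E] [NormedSpace ℝ E],
        ∀ (F G : ℝ → E), IsACDeriv F G →
        (∀ᵐ t ∂(volume.restrict (Icc (0:ℝ) 1)), ρ t = 0 → G t = 0) →
        IsACDeriv (fun s => F (phim ρ s)) (Hfun ρ G) := by
      intro E _ _ F G hF hG0
      obtain ⟨hHint, hHeq⟩ := hDat.master (II_to_Icc hF.1) hG0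
      constructor
      · exact Icc_to_II hHint
      · intro u hu
        have h1 := hF.2 (phim ρ u) (phim_mem ρ u)
        have h0 := hF.2 (phim ρ 0) (phim_mem ρ 0)
        have e1 := hHeq u hu
        have e0 := hHeq 0 (by norm_num)
        rw [intervalIntegral.integral_same] at e0
        show F (phim ρ u) = F (phim ρ 0) + ∫ s in (0:ℝ)..u, Hfun ρ G s
        rw [h1, h0, e1, ← e0, add_zero]
    -- vanishing hypothesis for g itself
    have hg0 : ∀ᵐ t ∂(volume.restrict (Icc (0:ℝ) 1)), ρ t = 0 → g t = 0 := by
      filter_upwards [hρg] with t ht h0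
      rw [ht] at h0
      exact norm_eq_zero.mp h0
    refine ⟨phim ρ, hDat.phim_strictMono, fun u _ => phim_mem ρ u,
      fun s _ => hDat.phim_rightCont s, ?_, Hfun ρ g, ?_, ?_, ?_, ?_⟩
    · -- (i)
      intro k F G hF hvan
      have hG0 : ∀ᵐ t ∂(volume.restrict (Icc (0:ℝ) 1)), ρ t = 0 → G t = 0 := by
        filter_upwards [hvan, hρg] with t h1 h2 h0
        apply h1
        rw [h2] at h0
        exact norm_eq_zero.mp h0
      exact ⟨Hfun ρ G, masterAC _ F G hF hG0⟩
    · -- α ∘ φ is AC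
      exact masterAC _ α g hα hg0
    · -- (ii)
      filter_upwards [hDat.ae_deriv_phim,
        hDat.ae_phim (P := fun t => ρ t = ‖g t‖) hρg] with s hs hsρg
      obtain ⟨hsne, hsD⟩ := hs
      refine ⟨Lv ρ / ρ (phim ρ s), hsD, ?_, ?_⟩
      · rw [Hfun, if_neg hsne]
      · have hLvnn : (0:ℝ) ≤ Lv ρ := le_of_lt hDat.pos
        rw [Hfun, if_neg hsne, norm_smul, Real.norm_eq_abs,
          abs_of_nonneg (div_nonneg hLvnn (hρnonneg _)), ← hsρg, ← hLv,
          div_mul_cancel₀ _ hsne]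
    · -- (iii)
      intro μ μ' hμ hμ'
      haveI := hμ.1
      haveI := hμ'.1
      have key : ∀ f : Proj d → ℝ, Continuous f →
          (∫ s in (0:ℝ)..1, hext f (Hfun ρ g s)) = ∫ t in (0:ℝ)..1, hext f (g t) := by
        intro f hf
        obtain ⟨C, hC⟩ := isCompact_univ.exists_bound_of_continuousOn
          (f := f) hf.continuousOn
        have hb : ∀ p, |f p| ≤ max C 0 := fun p =>
          le_trans (by simpa using hC p (mem_univ p)) (le_max_left _ _)
        have hGf_aesm : AEStronglyMeasurable (fun t => hext f (g t))
            (volume.restrict (Icc (0:ℝ) 1)) := by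
          rw [hext_eq]
          exact (continuous_hext hf).comp_aestronglyMeasurable hgIcc.1
        have hGfIcc : IntegrableOn (fun t => hext f (g t)) (Icc 0 1) volume := by
          apply Integrable.mono (hgnormIcc.const_mul (max C 0)) hGf_aesm
          filter_upwards with t
          rw [Real.norm_eq_abs (hext f (g t)), hext_eq]
          exact le_trans (hext_bound (le_max_right _ _) hb (g t)) (le_abs_self _)
        have hGf0 : ∀ᵐ t ∂(volume.restrict (Icc (0:ℝ) 1)),
            ρ t = 0 → hext f (g t) = 0 := by
          filter_upwards [hg0] with t ht h0
          rw [ht h0, hext_eq, hext_zero]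
        obtain ⟨-, hfeq⟩ := hDat.master hGfIcc hGf0
        have h1 := hfeq 1 (by norm_num)
        rw [hDat.phim_one] at h1
        rw [← h1]
        apply intervalIntegral.integral_congr
        intro s _
        show hext f (Hfun ρ g s) = Hfun ρ (fun t => hext f (g t)) s
        rw [Hfun, Hfun]
        by_cases hz : ρ (phim ρ s) = 0
        · rw [if_pos hz, if_pos hz, hext_eq, hext_zero]
        · have hLvnn : (0:ℝ) ≤ Lv ρ := le_of_lt hDat.pos
          rw [if_neg hz, if_neg hz, hext_eq,
            hext_smul _ _ (div_nonneg hLvnn (hρnonneg _)), smul_eq_mul]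
      apply measure_unique_proj
      intro f hf
      rw [hμ'.2 f hf, hμ.2 f hf, ← key f hf]
    · -- norm equality
      have hn0 : ∀ᵐ t ∂(volume.restrict (Icc (0:ℝ) 1)), ρ t = 0 → ‖g t‖ = 0 := by
        filter_upwards [hρg] with t ht h0
        rw [← ht, h0]
      obtain ⟨-, hneq⟩ := hDat.master hgnormIcc hn0
      have h1 := hneq 1 (by norm_num)
      rw [hDat.phim_one] at h1
      rw [← h1]
      apply intervalIntegral.integral_congr
      intro s _
      show ‖Hfun ρ g s‖ = Hfun ρ (fun t => ‖g t‖) s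
      rw [Hfun, Hfun]
      by_cases hz : ρ (phim ρ s) = 0
      · rw [if_pos hz, if_pos hz, norm_zero]
      · have hLvnn : (0:ℝ) ≤ Lv ρ := le_of_lt hDat.pos
        rw [if_neg hz, if_neg hz, norm_smul, Real.norm_eq_abs,
          abs_of_nonneg (div_nonneg hLvnn (hρnonneg _)), smul_eq_mul]
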